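/- Let (Ω, F, P) be a probability space satisfying the hypotheses below. Then lim_{|x| → ∞} liminf_{n → ∞} (1/n) · Σ_{k=1}^{n} P( t((k−1)x) ≤ t(kx) ) = 1, where the limit as |x| → ∞ is along the cofinite filter on ℤ^d (i.e. for every ε > 0 there is R such that liminf_{n → ∞} (1/n) · Σ_{k=1}^{n} P( t((k−1)x) ≤ t(kx) ) > 1 − ε whenever |x| ≥ R). (This is the first statement of Theorem 1.1, Uniformity of hitting times, stated with all properties of the contact process hitting times that the proof uses carried as explicit hypotheses.) -/

import Mathlib

open MeasureTheory Filter Finset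

/-- The 1-norm of a point of `ℤ^d`. -/
def onorm {d : ℕ} (x : Fin d → ℤ) : ℕ := ∑ i, (x i).natAbs

/-- One renewal step: `E[t(X)] ≤ E[t(y)] + C₁ + P(σ(y) ≤ t(X)) · E[t(X-y)]`. -/
lemma step_bound
    {Ω : Type*} [MeasurableSpace Ω] (P : Measure Ω) [IsProbabilityMeasure P]
    {d : ℕ} (t σ : (Fin d → ℤ) → Ω → ℝ)
    (ht_meas : ∀ x, Measurable (t x)) (hσ_meas : ∀ x, Measurable (σ x))
    (ht_int : ∀ x, Integrable (t x) P) (hσ_int : ∀ x, Integrable (σ x) P)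
    (hrenewal : ∀ x y, ∫ ω in {ω | σ y ω ≤ t x ω}, (t x ω - σ y ω) ∂P
      ≤ (P {ω | σ y ω ≤ t x ω}).toReal * ∫ ω, t (x - y) ω ∂P)
    (C₁ : ℝ) (hC₁ : ∀ y, ∫ ω, (σ y ω - t y ω) ∂P ≤ C₁)
    (X y : Fin d → ℤ) :
    ∫ ω, t X ω ∂P ≤ (∫ ω, t y ω ∂P) + C₁
      + (P {ω | σ y ω ≤ t X ω}).toReal * ∫ ω, t (X - y) ω ∂P := by
  set S : Set Ω := {ω | σ y ω ≤ t X ω} with hSdef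
  have hS : MeasurableSet S := measurableSet_le (hσ_meas y) (ht_meas X)
  have hptwise : ∀ ω, t X ω ≤ σ y ω + S.indicator (fun ω => t X ω - σ y ω) ω := by
    intro ω
    by_cases h : σ y ω ≤ t X ω
    · rw [Set.indicator_of_mem (show ω ∈ S from h)]; ring_nf; exact le_refl _
    · rw [Set.indicator_of_notMem (show ω ∉ S from h)]; push_neg at h; linarith
  have hind_int : Integrable (S.indicator (fun ω => t X ω - σ y ω)) P :=
    ((ht_int X).sub (hσ_int y)).indicator hS
  have h1 : ∫ ω, t X ω ∂P
      ≤ ∫ ω, (σ y ω + S.indicator (fun ω => t X ω - σ y ω) ω) ∂P :=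
    integral_mono (ht_int X) ((hσ_int y).add hind_int) hptwise
  rw [integral_add (hσ_int y) hind_int, integral_indicator hS] at h1
  have h2 : ∫ ω in S, (t X ω - σ y ω) ∂P
      ≤ (P S).toReal * ∫ ω, t (X - y) ω ∂P := hrenewal X y
  have h3 : ∫ ω, σ y ω ∂P ≤ (∫ ω, t y ω ∂P) + C₁ := by
    have := hC₁ y
    rw [integral_sub (hσ_int y) (ht_int y)] at this
    linarith
  linarith

/-- First statement of Theorem 1.1 (Uniformity of hitting times):
`lim_{|x|→∞} liminf_{n→∞} (1/n) ∑_{k=1}^n P(t((k-1)x) ≤ t(kx)) = 1`,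
the limit in `x` being along the cofinite filter on `ℤ^d`. -/
theorem stmt_0
    {Ω : Type*} [MeasurableSpace Ω] (P : Measure Ω) [IsProbabilityMeasure P]
    (d : ℕ) (hd : 1 ≤ d)
    (t σ : (Fin d → ℤ) → Ω → ℝ)
    (ht_meas : ∀ x, Measurable (t x)) (hσ_meas : ∀ x, Measurable (σ x))
    (ht_nonneg : ∀ x ω, 0 ≤ t x ω) (hσ_nonneg : ∀ x ω, 0 ≤ σ x ω)
    (ht_int : ∀ x, Integrable (t x) P) (hσ_int : ∀ x, Integrable (σ x) P)
    -- (i) the renewal bound of Lemma 3.1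
    (hrenewal : ∀ x y, ∫ ω in {ω | σ y ω ≤ t x ω}, (t x ω - σ y ω) ∂P
      ≤ (P {ω | σ y ω ≤ t x ω}).toReal * ∫ ω, t (x - y) ω ∂P)
    -- (ii) t ≤ σ a.s. and uniform bound on E[σ - t]
    (htσ : ∀ y, ∀ᵐ ω ∂P, t y ω ≤ σ y ω)
    (C₁ : ℝ) (hC₁ : ∀ y, ∫ ω, (σ y ω - t y ω) ∂P ≤ C₁)
    -- (iii) normalized expected hitting times converge
    (μ : (Fin d → ℤ) → ℝ) (hμ_nonneg : ∀ x, 0 ≤ μ x)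
    (hμ : ∀ x, Tendsto (fun n : ℕ => (∫ ω, t (n • x) ω ∂P) / n) atTop (nhds (μ x)))
    -- (iv) the shape theorem (Lemma 3.2)
    (hμ_inf : Tendsto μ cofinite atTop)
    (hshape : Tendsto (fun x => (∫ ω, t x ω ∂P) / μ x) cofinite (nhds 1)) :
    Tendsto (fun x : Fin d → ℤ => liminf (fun n : ℕ =>
        (1 / (n : ℝ)) * ∑ k ∈ Finset.Icc 1 n,
          (P {ω | t ((k - 1) • x) ω ≤ t (k • x) ω}).toReal) atTop)
      cofinite (nhds 1) := by
  classical
  -- notation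
  set A : (Fin d → ℤ) → ℕ → ℝ := fun x n =>
    (1 / (n : ℝ)) * ∑ k ∈ Finset.Icc 1 n,
      (P {ω | t ((k - 1) • x) ω ≤ t (k • x) ω}).toReal with hA
  set L : (Fin d → ℤ) → ℝ := fun x => liminf (A x) atTop with hL
  set g : (Fin d → ℤ) → ℝ := fun x => (μ x - C₁) / (∫ ω, t x ω ∂P) with hg
  -- basic facts about A
  have hA_nonneg : ∀ x n, 0 ≤ A x n := by
    intro x n
    apply mul_nonneg (by positivity)
    exact Finset.sum_nonneg fun k _ => ENNReal.toReal_nonneg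
  have hA_le_one : ∀ x n, A x n ≤ 1 := by
    intro x n
    rcases Nat.eq_zero_or_pos n with h0 | hpos
    · simp [hA, h0]
    · have hsum : ∑ k ∈ Finset.Icc 1 n,
          (P {ω | t ((k - 1) • x) ω ≤ t (k • x) ω}).toReal ≤ (n : ℝ) := by
        calc ∑ k ∈ Finset.Icc 1 n,
              (P {ω | t ((k - 1) • x) ω ≤ t (k • x) ω}).toReal
            ≤ ∑ _k ∈ Finset.Icc 1 n, (1 : ℝ) := by
              apply Finset.sum_le_sum
              intro k _
              have := prob_le_one (μ := P)
                (s := {ω | t ((k - 1) • x) ω ≤ t (k • x) ω})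
              calc (P {ω | t ((k - 1) • x) ω ≤ t (k • x) ω}).toReal
                  ≤ (1 : ENNReal).toReal := ENNReal.toReal_mono (by simp) this
                _ = 1 := by simp
          _ = (n : ℝ) := by simp [Nat.card_Icc]
      have hn : (0:ℝ) < n := by exact_mod_cast hpos
      calc A x n = (1 / (n : ℝ)) * ∑ k ∈ Finset.Icc 1 n,
            (P {ω | t ((k - 1) • x) ω ≤ t (k • x) ω}).toReal := rfl
        _ ≤ (1 / (n : ℝ)) * (n : ℝ) := by
            apply mul_le_mul_of_nonneg_left hsum (by positivity)
        _ = 1 := by field_simp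
  -- liminf is at most 1
  have hL_le_one : ∀ x, L x ≤ 1 := by
    intro x
    apply liminf_le_of_frequently_le
    · exact Frequently.of_forall fun n => hA_le_one x n
    · exact isBoundedUnder_of ⟨0, fun n => hA_nonneg x n⟩
  -- key lower bound for liminf when ∫ t x > 0
  have hL_ge : ∀ x, 0 < (∫ ω, t x ω ∂P) → g x ≤ L x := by
    intro x hT
    set T : ℝ := ∫ ω, t x ω ∂P with hTdef
    set F : ℕ → ℝ := fun n => ∫ ω, t (n • x) ω ∂P with hF
    -- single step inequality
    have hstep : ∀ j : ℕ, F (j + 1) - F j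
        ≤ C₁ + (P {ω | t (j • x) ω ≤ t ((j+1) • x) ω}).toReal * T := by
      intro j
      have hxy : ((j+1) • x - j • x) = x := by
        rw [succ_nsmul]; exact add_sub_cancel_left _ _
      have h1 := step_bound P t σ ht_meas hσ_meas ht_int hσ_int hrenewal C₁ hC₁
        ((j+1) • x) (j • x)
      rw [hxy] at h1
      have hq : (P {ω | σ (j • x) ω ≤ t ((j+1) • x) ω}).toReal
          ≤ (P {ω | t (j • x) ω ≤ t ((j+1) • x) ω}).toReal := by
        apply ENNReal.toReal_mono (measure_ne_top P _)
        apply measure_mono_ae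
        filter_upwards [htσ (j • x)] with ω h hω
        exact le_trans h hω
      have := mul_le_mul_of_nonneg_right hq (le_of_lt hT)
      simp only [F]
      linarith
    -- telescoping bound
    have hkey : ∀ n : ℕ, F n - F 0
        ≤ n * C₁ + (∑ k ∈ Finset.Icc 1 n,
            (P {ω | t ((k - 1) • x) ω ≤ t (k • x) ω}).toReal) * T := by
      intro n
      have htel : ∑ j ∈ Finset.range n, (F (j + 1) - F j) = F n - F 0 :=
        Finset.sum_range_sub F n
      have hsum : ∑ j ∈ Finset.range n, (F (j + 1) - F j)
          ≤ ∑ j ∈ Finset.range n,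
            (C₁ + (P {ω | t (j • x) ω ≤ t ((j+1) • x) ω}).toReal * T) :=
        Finset.sum_le_sum fun j _ => hstep j
      rw [htel] at hsum
      have hre : ∑ k ∈ Finset.Icc 1 n,
            (P {ω | t ((k - 1) • x) ω ≤ t (k • x) ω}).toReal
          = ∑ j ∈ Finset.range n,
            (P {ω | t (j • x) ω ≤ t ((j+1) • x) ω}).toReal := by
        rw [← Finset.Ico_add_one_right_eq_Icc, Finset.sum_Ico_eq_sum_range]
        apply Finset.sum_congr rfl
        intro j _
        have e1 : 1 + j - 1 = j := by omega
        have e2 : 1 + j = j + 1 := by omega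
        rw [e1, e2]
      rw [hre, Finset.sum_add_distrib, Finset.sum_const, ← Finset.sum_mul] at *
      simpa using hsum
    -- the comparison sequence
    set B : ℕ → ℝ := fun n => (F n / n - C₁ - F 0 / n) / T with hB
    have hBtendsto : Tendsto B atTop (nhds (g x)) := by
      have h1 : Tendsto (fun n : ℕ => F n / n) atTop (nhds (μ x)) := hμ x
      have h2 : Tendsto (fun n : ℕ => F 0 / n) atTop (nhds 0) :=
        tendsto_const_div_atTop_nhds_zero_nat (F 0)
      have h3 : Tendsto (fun n : ℕ => F n / n - C₁ - F 0 / n) atTop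
          (nhds (μ x - C₁ - 0)) := (h1.sub tendsto_const_nhds).sub h2
      have h4 := h3.div_const T
      simpa [hg] using h4
    have hBA : ∀ n : ℕ, 1 ≤ n → B n ≤ A x n := by
      intro n hn
      have hnpos : (0:ℝ) < n := by exact_mod_cast hn
      have h2 : F n - C₁ * n - F 0 ≤ (∑ k ∈ Finset.Icc 1 n,
            (P {ω | t ((k - 1) • x) ω ≤ t (k • x) ω}).toReal) * T := by
        have := hkey n; linarith
      have hBn : B n = (F n - C₁ * n - F 0) / (n * T) := by
        simp only [hB]
        field_simp
      rw [hBn, hA]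
      rw [div_le_iff₀ (by positivity)]
      calc F n - C₁ * n - F 0
          ≤ (∑ k ∈ Finset.Icc 1 n,
              (P {ω | t ((k - 1) • x) ω ≤ t (k • x) ω}).toReal) * T := h2
        _ = 1 / (n:ℝ) * (∑ k ∈ Finset.Icc 1 n,
              (P {ω | t ((k - 1) • x) ω ≤ t (k • x) ω}).toReal) * (n * T) := by
            field_simp
    calc g x = liminf B atTop := (hBtendsto.liminf_eq).symm
      _ ≤ liminf (A x) atTop := by
          apply liminf_le_liminf
          · filter_upwards [eventually_ge_atTop 1] with n hn
            exact hBA n hn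
          · exact hBtendsto.isBoundedUnder_ge
          · exact isCoboundedUnder_ge_of_le _ fun n => hA_le_one x n
  -- eventual positivity of ∫ t x and μ x
  have hev : ∀ᶠ x in (cofinite : Filter (Fin d → ℤ)),
      1 ≤ μ x ∧ (1:ℝ)/2 < (∫ ω, t x ω ∂P) / μ x := by
    have h1 : ∀ᶠ x in cofinite, 1 ≤ μ x := hμ_inf.eventually_ge_atTop 1
    have h2 : ∀ᶠ x in cofinite, (1:ℝ)/2 < (∫ ω, t x ω ∂P) / μ x :=
      hshape.eventually (eventually_gt_nhds (by norm_num))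
    exact h1.and h2
  have hevT : ∀ᶠ x in (cofinite : Filter (Fin d → ℤ)),
      0 < (∫ ω, t x ω ∂P) ∧ 0 < μ x := by
    filter_upwards [hev] with x ⟨h1, h2⟩
    have hμpos : 0 < μ x := lt_of_lt_of_le one_pos h1
    constructor
    · have := (div_pos_iff.mp (lt_trans (by norm_num) h2))
      rcases this with ⟨hnum, _⟩ | ⟨_, hden⟩
      · exact hnum
      · linarith
    · exact hμpos
  -- g tends to 1
  have hg_tendsto : Tendsto g cofinite (nhds 1) := by
    have h1 : Tendsto (fun x => 1 - C₁ / μ x) cofinite (nhds (1 - 0)) :=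
      tendsto_const_nhds.sub (tendsto_const_nhds.div_atTop hμ_inf)
    have h2 : Tendsto (fun x => ((∫ ω, t x ω ∂P) / μ x)⁻¹) cofinite
        (nhds (1 : ℝ)⁻¹) := hshape.inv₀ one_ne_zero
    have h3 : Tendsto (fun x => (1 - C₁ / μ x) * ((∫ ω, t x ω ∂P) / μ x)⁻¹)
        cofinite (nhds ((1 - 0) * (1:ℝ)⁻¹)) := h1.mul h2
    have h4 : Tendsto (fun x => (1 - C₁ / μ x) * ((∫ ω, t x ω ∂P) / μ x)⁻¹)
        cofinite (nhds 1) := by simpa using h3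
    apply h4.congr'
    filter_upwards [hevT] with x ⟨hT, hμx⟩
    rw [hg]
    field_simp
    try ring
  -- squeeze
  apply tendsto_of_tendsto_of_tendsto_of_le_of_le' hg_tendsto tendsto_const_nhds
  · filter_upwards [hevT] with x ⟨hT, _⟩
    exact hL_ge x hT
  · exact Eventually.of_forall hL_le_one
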